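/- Let G = (V,E) be a graph on n vertices and m edges. Suppose edges are contracted one at a time (with arbitrary interleaved edge deletions), where contracting edge u_k v_k in the current graph G_k costs at most α · min(deg_{G_k}(u_k), deg_{G_k}(v_k)). Then the total cost over any sequence that contracts the graph down to a single vertex is at most O(α · m · log n); formally, at most α · (log₂ n + 1) · ∑_{v∈V} deg_G(v) = 2α·m·(log₂ n + 1). -/
import Mathlib


open Finset

/-- Total cost of a contraction sequence. Start with the trivial partition of the vertex
set of a graph `G` with `m` edges into singleton classes `C 0 x = {x}`. At each step
`k < n - 1` the classes of `u k` and `v k` (which are distinct) are merged, at a cost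
`cost k` which is at most `α` times the smaller of the total `G`-degrees of the two
classes. Then the total cost is at most `α (log₂ n + 1) ∑_v deg_G(v) = 2 α m (log₂ n + 1)`. -/
theorem contraction_sequence_total_cost {V : Type*} [Fintype V] [DecidableEq V]
    (G : SimpleGraph V) [DecidableRel G.Adj]
    (n m : ℕ) (hn : Fintype.card V = n) (hn2 : 2 ≤ n) (hm : G.edgeFinset.card = m)
    (α : ℝ) (hα : 0 ≤ α)
    (C : ℕ → V → Finset V) (u v : ℕ → V) (cost : ℕ → ℝ)
    (hC0 : ∀ x, C 0 x = {x})
    (hmerge : ∀ k < n - 1, C k (u k) ≠ C k (v k) ∧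
      ∀ x, C (k + 1) x =
        if x ∈ C k (u k) ∪ C k (v k) then C k (u k) ∪ C k (v k) else C k x)
    (hcost : ∀ k < n - 1, cost k ≤
      α * min (∑ x ∈ C k (u k), (G.degree x : ℝ)) (∑ x ∈ C k (v k), (G.degree x : ℝ))) :
    ∑ k ∈ Finset.range (n - 1), cost k ≤
        α * (Real.logb 2 n + 1) * ∑ x : V, (G.degree x : ℝ) ∧
      α * (Real.logb 2 n + 1) * ∑ x : V, (G.degree x : ℝ) =
        2 * α * m * (Real.logb 2 n + 1) := by
  classical
  -- each vertex lies in its own class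
  have hmem : ∀ k ≤ n - 1, ∀ x, x ∈ C k x := by
    intro k
    induction k with
    | zero => intro _ x; simp [hC0]
    | succ k ih =>
      intro hk1 x
      have hk : k < n - 1 := hk1
      obtain ⟨-, h2⟩ := hmerge k hk
      rw [h2 x]
      split
      · assumption
      · exact ih (le_of_lt hk) x
  -- classes are well-defined
  have hclass : ∀ k ≤ n - 1, ∀ x y, x ∈ C k y → C k x = C k y := by
    intro k
    induction k with
    | zero =>
      intro _ x y hx
      rw [hC0 y, mem_singleton] at hx
      rw [hx]
    | succ k ih =>
      intro hk1 x y hxy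
      have hk : k < n - 1 := hk1
      obtain ⟨hne, h2⟩ := hmerge k hk
      have ihk := ih (le_of_lt hk)
      rw [h2 y] at hxy
      by_cases hy : y ∈ C k (u k) ∪ C k (v k)
      · rw [if_pos hy] at hxy
        rw [h2 x, if_pos hxy, h2 y, if_pos hy]
      · rw [if_neg hy] at hxy
        have hcxy : C k x = C k y := ihk x y hxy
        have hx : x ∉ C k (u k) ∪ C k (v k) := by
          intro hx
          apply hy
          have : C k x = C k (u k) ∨ C k x = C k (v k) := by
            rcases mem_union.mp hx with h | h
            · exact Or.inl (ihk x _ h)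
            · exact Or.inr (ihk x _ h)
          have hymem : y ∈ C k x := by
            rw [hcxy]; exact hmem k (le_of_lt hk) y
          rcases this with h | h
          · rw [h] at hymem; exact mem_union.mpr (Or.inl hymem)
          · rw [h] at hymem; exact mem_union.mpr (Or.inr hymem)
        rw [h2 x, if_neg hx, h2 y, if_neg hy, hcxy]
  -- the small-side class
  set A : ℕ → Finset V := fun k =>
    if (C k (u k)).card ≤ (C k (v k)).card then C k (u k) else C k (v k) with hA
  have hAsub : ∀ k, A k ⊆ C k (u k) ∪ C k (v k) := by
    intro k
    simp only [hA]
    split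
    · exact subset_union_left
    · exact subset_union_right
  -- min of degree sums bounded by sum over A k
  have hmin : ∀ k < n - 1,
      min (∑ x ∈ C k (u k), (G.degree x : ℝ)) (∑ x ∈ C k (v k), (G.degree x : ℝ)) ≤
        ∑ x ∈ A k, (G.degree x : ℝ) := by
    intro k _
    simp only [hA]
    split
    · exact min_le_left _ _
    · exact min_le_right _ _
  -- doubling
  have hdouble : ∀ k < n - 1, ∀ x ∈ A k, 2 * (C k x).card ≤ (C (k + 1) x).card := by
    intro k hk x hx
    obtain ⟨hne, h2⟩ := hmerge k hk
    have hkle := le_of_lt hk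
    have hdisj : Disjoint (C k (u k)) (C k (v k)) := by
      rw [disjoint_left]
      intro z hzu hzv
      exact hne ((hclass k hkle z _ hzu).symm.trans (hclass k hkle z _ hzv))
    have hxU : x ∈ C k (u k) ∪ C k (v k) := hAsub k hx
    have hcard : (C k (u k) ∪ C k (v k)).card = (C k (u k)).card + (C k (v k)).card :=
      card_union_of_disjoint hdisj
    have hCx : C k x = A k := by
      simp only [hA] at hx ⊢
      split at hx <;> [skip; skip] <;>
        first
          | (rw [if_pos (by assumption)]; exact hclass k hkle x _ hx)
          | (rw [if_neg (by assumption)]; exact hclass k hkle x _ hx)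
    have hAle : 2 * (A k).card ≤ (C k (u k)).card + (C k (v k)).card := by
      simp only [hA]
      split
      · omega
      · omega
    rw [h2 x, if_pos hxU, hcard, hCx]
    exact hAle
  -- monotonicity
  have hmono : ∀ k < n - 1, ∀ x, (C k x).card ≤ (C (k + 1) x).card := by
    intro k hk x
    obtain ⟨hne, h2⟩ := hmerge k hk
    rw [h2 x]
    by_cases hx : x ∈ C k (u k) ∪ C k (v k)
    · rw [if_pos hx]
      apply card_le_card
      rcases mem_union.mp hx with h | h
      · rw [hclass k (le_of_lt hk) x _ h]; exact subset_union_left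
      · rw [hclass k (le_of_lt hk) x _ h]; exact subset_union_right
    · rw [if_neg hx]
  -- growth: 2 ^ (number of charges) ≤ class size
  have hgrow : ∀ k ≤ n - 1, ∀ x,
      2 ^ ((Finset.range k).filter (fun j => x ∈ A j)).card ≤ (C k x).card := by
    intro k
    induction k with
    | zero => intro _ x; simp [hC0]
    | succ k ih =>
      intro hk1 x
      have hk : k < n - 1 := hk1
      have ihx := ih (le_of_lt hk) x
      rw [Finset.range_add_one, Finset.filter_insert]
      by_cases hx : x ∈ A k
      · rw [if_pos hx, card_insert_of_notMem (by simp)]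
        calc 2 ^ (((Finset.range k).filter (fun j => x ∈ A j)).card + 1)
            = 2 * 2 ^ (((Finset.range k).filter (fun j => x ∈ A j)).card) := by ring
          _ ≤ 2 * (C k x).card := by omega
          _ ≤ (C (k + 1) x).card := hdouble k hk x hx
      · rw [if_neg hx]
        exact le_trans ihx (hmono k hk x)
  -- number of charges per vertex is at most log₂ n
  have hloga : ∀ x, (((Finset.range (n - 1)).filter (fun j => x ∈ A j)).card : ℝ) ≤
      Real.logb 2 n := by
    intro x
    set t := ((Finset.range (n - 1)).filter (fun j => x ∈ A j)).card
    have h1 : 2 ^ t ≤ n := by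
      calc 2 ^ t ≤ (C (n - 1) x).card := hgrow (n - 1) le_rfl x
        _ ≤ Fintype.card V := card_le_card (subset_univ _) |>.trans_eq (card_univ)
        _ = n := hn
    have h2 : ((2 : ℝ) ^ t) ≤ (n : ℝ) := by exact_mod_cast h1
    have h3 : Real.logb 2 ((2 : ℝ) ^ t) ≤ Real.logb 2 n :=
      Real.logb_le_logb_of_le one_lt_two (by positivity) h2
    rwa [Real.logb_pow, Real.logb_self_eq_one one_lt_two, mul_one] at h3
  -- main chain
  have hsum : ∑ k ∈ Finset.range (n - 1), cost k ≤
      α * (Real.logb 2 n) * ∑ x : V, (G.degree x : ℝ) := by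
    calc ∑ k ∈ Finset.range (n - 1), cost k
        ≤ ∑ k ∈ Finset.range (n - 1), α * ∑ x ∈ A k, (G.degree x : ℝ) := by
          apply Finset.sum_le_sum
          intro k hk
          have hk' := Finset.mem_range.mp hk
          exact le_trans (hcost k hk') (mul_le_mul_of_nonneg_left (hmin k hk') hα)
      _ = α * ∑ k ∈ Finset.range (n - 1), ∑ x ∈ A k, (G.degree x : ℝ) := by
          rw [Finset.mul_sum]
      _ = α * ∑ x : V, (G.degree x : ℝ) *
            (((Finset.range (n - 1)).filter (fun j => x ∈ A j)).card : ℝ) := by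
          congr 1
          have hrw : ∀ k, ∑ x ∈ A k, (G.degree x : ℝ) =
              ∑ x : V, if x ∈ A k then (G.degree x : ℝ) else 0 := by
            intro k
            rw [Finset.sum_ite_mem, Finset.univ_inter]
          simp_rw [hrw]
          rw [Finset.sum_comm]
          apply Finset.sum_congr rfl
          intro x _
          rw [← Finset.sum_filter, Finset.sum_const, nsmul_eq_mul, mul_comm]
      _ ≤ α * ∑ x : V, (G.degree x : ℝ) * Real.logb 2 n := by
          apply mul_le_mul_of_nonneg_left _ hα
          apply Finset.sum_le_sum
          intro x _
          exact mul_le_mul_of_nonneg_left (hloga x) (by positivity)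
      _ = α * Real.logb 2 n * ∑ x : V, (G.degree x : ℝ) := by
          rw [← Finset.sum_mul]; ring
  have hdegnn : (0 : ℝ) ≤ ∑ x : V, (G.degree x : ℝ) := by positivity
  have hlogbn : (0 : ℝ) ≤ Real.logb 2 n := by
    apply Real.logb_nonneg (by norm_num)
    exact_mod_cast le_trans (by norm_num) hn2
  constructor
  · refine le_trans hsum ?_
    apply mul_le_mul_of_nonneg_right _ hdegnn
    nlinarith
  · have hdeg : ∑ x : V, (G.degree x : ℝ) = 2 * m := by
      have := G.sum_degrees_eq_twice_card_edges
      rw [hm] at this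
      exact_mod_cast this
    rw [hdeg]; ring
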